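/- For the functions f_{s,B/Q} = χ_{s-1} * (Mod_{-B/Q}(f·1_{ℤ∖2S})), where χ_{s-1} is a Schwartz-type bump with rapidly decaying kernel at scale 10^{s-1} and S is an interval with |S| ≥ 10^{s/(4ε)}, one has the localized average bound ⟨f_{s,B/Q}⟩_S ≲ 2^{-100s}·{f}_S, where {f}_S = |S|^{-1}Σ_x |f(x)|/(1+dist(x,S)/|S|)³. -/

import Mathlib

/-- The dilate `2^t S` of the integer interval `S = ℤ ∩ [a,b]` (encoded as `p = (a,b)`):
the integers within distance `2^t |S| / 2` of the center `(a+b)/2`, where `|S| = b-a+1`.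
In particular `dilate 1 p` is the doubled interval `2S`. -/
noncomputable def dilate (t : ℕ) (p : ℤ × ℤ) : Finset ℤ :=
  Finset.Icc
    ⌈((p.1 : ℝ) + (p.2 : ℝ)) / 2 - 2 ^ t * ((p.2 : ℝ) - (p.1 : ℝ) + 1) / 2⌉
    ⌊((p.1 : ℝ) + (p.2 : ℝ)) / 2 + 2 ^ t * ((p.2 : ℝ) - (p.1 : ℝ) + 1) / 2⌋

/-- The distance from `x ∈ ℤ` to the interval `ℤ ∩ [a,b]`. -/
def distInt (a b x : ℤ) : ℤ := max 0 (max (a - x) (x - b))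

/-- `f_{s,B/Q} = χ_{s-1} * (Mod_{-B/Q}(f·1_{ℤ∖2S}))`, built from a convolution kernel `k`. -/
noncomputable def fsLoc (k : ℤ → ℂ) (θ : ℝ) (a b : ℤ) (f : ℤ →₀ ℂ) (x : ℤ) : ℂ :=
  ∑' y : ℤ, k (x - y) *
    (Complex.exp (-(2 * (Real.pi : ℂ) * Complex.I) * (θ : ℂ) * (y : ℂ)) *
      (if y ∈ dilate 1 (a, b) then 0 else f y))

/-- The point `x ∈ [a,b]` is at distance at least `distInt a b y` from `y`. -/
private lemma distInt_le_abs (a b x y : ℤ) (h1 : a ≤ x) (h2 : x ≤ b) :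
    distInt a b y ≤ |x - y| := by
  rw [distInt]
  rcases abs_cases (x - y) with ⟨h, h'⟩ | ⟨h, h'⟩ <;> rw [h] <;> omega

/-- A point outside the doubled interval `2S` is at distance more than `|S|/2` from `S`. -/
private lemma dilate_dist (a b y : ℤ) (hy : y ∉ dilate 1 (a, b)) :
    ((b - a + 1 : ℤ) : ℝ) ≤ 2 * ((distInt a b y : ℤ) : ℝ) := by
  simp only [dilate, Finset.mem_Icc, not_and_or, not_le] at hy
  have hda : a - y ≤ distInt a b y := by rw [distInt]; omega
  have hdb : y - b ≤ distInt a b y := by rw [distInt]; omega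
  have hda' : ((a - y : ℤ) : ℝ) ≤ ((distInt a b y : ℤ) : ℝ) := by exact_mod_cast hda
  have hdb' : ((y - b : ℤ) : ℝ) ≤ ((distInt a b y : ℤ) : ℝ) := by exact_mod_cast hdb
  push_cast at hda' hdb' ⊢
  rcases hy with h | h
  · have hc : (y : ℝ) < ((a : ℝ) + (b : ℝ)) / 2 - 2 ^ 1 * ((b : ℝ) - (a : ℝ) + 1) / 2 :=
      Int.lt_ceil.mp h
    norm_num at hc
    linarith
  · have hc : ((a : ℝ) + (b : ℝ)) / 2 + 2 ^ 1 * ((b : ℝ) - (a : ℝ) + 1) / 2 < (y : ℝ) :=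
      Int.floor_lt.mp h
    norm_num at hc
    linarith

/-- The core numerical inequality. -/
private lemma core_ineq (N d T E : ℝ) (hT : 0 < T) (hN : 0 < N) (hE : 0 < E)
    (hd : N ≤ 2 * d) (key : T ^ 999 * E ≤ N ^ 999) :
    N * (T ^ 999 / d ^ 1000) ≤ 27 * 2 ^ 997 * E⁻¹ / (1 + d / N) ^ 3 := by
  have hd0 : 0 < d := by linarith
  have h1 : 1 + d / N ≤ 3 * (d / N) := by
    have h2 : (1 : ℝ) ≤ 2 * d / N := (one_le_div hN).mpr hd
    rw [mul_div_assoc] at h2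
    linarith
  have hcube : (1 + d / N) ^ 3 ≤ 27 * d ^ 3 / N ^ 3 := by
    calc (1 + d / N) ^ 3 ≤ (3 * (d / N)) ^ 3 := pow_le_pow_left₀ (by positivity) h1 3
      _ = 27 * d ^ 3 / N ^ 3 := by field_simp; ring
  have hA : N * T ^ 999 ≤ E⁻¹ * N ^ 1000 := by
    rw [inv_mul_eq_div, le_div_iff₀ hE]
    calc N * T ^ 999 * E = N * (T ^ 999 * E) := by ring
      _ ≤ N * N ^ 999 := by gcongr
      _ = N ^ 1000 := by ring
  have h997 : N ^ 997 ≤ 2 ^ 997 * d ^ 997 := by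
    calc N ^ 997 ≤ (2 * d) ^ 997 := pow_le_pow_left₀ hN.le hd 997
      _ = 2 ^ 997 * d ^ 997 := mul_pow 2 d 997
  have hnum : N * T ^ 999 ≤ 2 ^ 997 * E⁻¹ * N ^ 3 * d ^ 997 := by
    calc N * T ^ 999 ≤ E⁻¹ * N ^ 1000 := hA
      _ = (E⁻¹ * N ^ 3) * N ^ 997 := by ring
      _ ≤ (E⁻¹ * N ^ 3) * (2 ^ 997 * d ^ 997) := by gcongr
      _ = 2 ^ 997 * E⁻¹ * N ^ 3 * d ^ 997 := by ring
  have hmain : N * (T ^ 999 / d ^ 1000) ≤ 2 ^ 997 * E⁻¹ * (N ^ 3 / d ^ 3) := by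
    have e1 : N * (T ^ 999 / d ^ 1000) = (N * T ^ 999) / d ^ 1000 := by ring
    have e2 : 2 ^ 997 * E⁻¹ * (N ^ 3 / d ^ 3) =
        (2 ^ 997 * E⁻¹ * N ^ 3 * d ^ 997) / d ^ 1000 := by
      field_simp
    rw [e1, e2]
    gcongr
  calc N * (T ^ 999 / d ^ 1000) ≤ 2 ^ 997 * E⁻¹ * (N ^ 3 / d ^ 3) := hmain
    _ ≤ 27 * 2 ^ 997 * E⁻¹ / (1 + d / N) ^ 3 := by
        rw [le_div_iff₀ (by positivity)]
        calc 2 ^ 997 * E⁻¹ * (N ^ 3 / d ^ 3) * (1 + d / N) ^ 3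
            ≤ 2 ^ 997 * E⁻¹ * (N ^ 3 / d ^ 3) * (27 * d ^ 3 / N ^ 3) := by gcongr
          _ = 27 * 2 ^ 997 * E⁻¹ := by field_simp

/-- Localization estimate: if `f` is supported off `2S`, the kernel `k` decays rapidly at
scale `10^{s-1}`, and `|S| ≥ 10^{s/(4ε)}`, then `⟨f_{s,B/Q}⟩_S ≲ 2^{-100s} {f}_S`. -/
theorem stmt_16 :
    ∃ C > (0 : ℝ), ∀ (ε : ℝ), 0 < ε → ε ≤ 1 / 100 → ∀ s : ℕ, 1 ≤ s →
      ∀ B Q : ℕ, 0 < Q → Nat.Coprime B Q → 2 ^ (s - 1) ≤ Q → Q < 2 ^ s →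
      ∀ k : ℤ → ℂ,
        (∀ x : ℤ, ‖k x‖ ≤ ((10 : ℝ) ^ (s - 1))⁻¹ *
          (1 + |(x : ℝ)| / (10 : ℝ) ^ (s - 1)) ^ (-(1000 : ℝ))) →
      ∀ a b : ℤ, a ≤ b → ((10 : ℝ) ^ ((s : ℝ) / (4 * ε))) ≤ ((b - a + 1 : ℤ) : ℝ) →
      ∀ f : ℤ →₀ ℂ,
        ((b - a + 1 : ℤ) : ℝ)⁻¹ *
            ∑ x ∈ Finset.Icc a b, ‖fsLoc k ((B : ℝ) / (Q : ℝ)) a b f x‖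
          ≤ C * (2 : ℝ) ^ (-(100 * s : ℝ)) *
            (((b - a + 1 : ℤ) : ℝ)⁻¹ *
              ∑ x ∈ f.support,
                ‖f x‖ / (1 + (distInt a b x : ℝ) / ((b - a + 1 : ℤ) : ℝ)) ^ 3) := by
  refine ⟨27 * 2 ^ 997, by positivity, ?_⟩
  intro ε hε hε1 s hs B Q hQ hcop hQ1 hQ2 k hk a b hab hbig f
  set θ : ℝ := (B : ℝ) / (Q : ℝ) with hθ
  set N : ℝ := ((b - a + 1 : ℤ) : ℝ) with hNdef
  set T : ℝ := (10 : ℝ) ^ (s - 1) with hTdef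
  set E : ℝ := (2 : ℝ) ^ (100 * s) with hEdef
  have hT : 0 < T := by positivity
  have hE : 0 < E := by positivity
  -- N is huge
  have hN25 : (10 : ℝ) ^ (25 * s) ≤ N := by
    have hs0 : (0 : ℝ) ≤ (s : ℝ) := Nat.cast_nonneg s
    have h1 : ((25 * s : ℕ) : ℝ) ≤ (s : ℝ) / (4 * ε) := by
      rw [le_div_iff₀ (by positivity)]
      push_cast
      nlinarith [mul_le_mul_of_nonneg_left hε1 hs0]
    calc (10 : ℝ) ^ (25 * s) = (10 : ℝ) ^ (((25 * s : ℕ)) : ℝ) :=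
          (Real.rpow_natCast 10 (25 * s)).symm
      _ ≤ (10 : ℝ) ^ ((s : ℝ) / (4 * ε)) :=
          Real.rpow_le_rpow_of_exponent_le (by norm_num) h1
      _ ≤ N := hbig
  have hN0 : 0 < N := lt_of_lt_of_le (by positivity) hN25
  -- the key power inequality
  have key : T ^ 999 * E ≤ N ^ 999 := by
    have e2 : E ≤ (10 : ℝ) ^ (100 * s) := pow_le_pow_left₀ (by norm_num) (by norm_num) _
    calc T ^ 999 * E ≤ (10 : ℝ) ^ ((s - 1) * 999) * (10 : ℝ) ^ (100 * s) := by
          rw [hTdef, ← pow_mul]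
          exact mul_le_mul_of_nonneg_left e2 (by positivity)
      _ = (10 : ℝ) ^ ((s - 1) * 999 + 100 * s) := (pow_add 10 _ _).symm
      _ ≤ (10 : ℝ) ^ (25 * s * 999) := pow_le_pow_right₀ (by norm_num) (by omega)
      _ = ((10 : ℝ) ^ (25 * s)) ^ 999 := pow_mul 10 _ _
      _ ≤ N ^ 999 := pow_le_pow_left₀ (by positivity) hN25 999
  -- rewriting the rpow constant
  have hrw2 : (2 : ℝ) ^ (-(100 * (s : ℝ))) = E⁻¹ := by
    rw [show -(100 * (s : ℝ)) = -(((100 * s : ℕ)) : ℝ) by push_cast; ring,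
      Real.rpow_neg (by norm_num), Real.rpow_natCast]
  -- pointwise bound on fsLoc
  have hpt : ∀ x : ℤ, ‖fsLoc k θ a b f x‖ ≤
      ∑ y ∈ f.support, (if y ∈ dilate 1 (a, b) then 0 else ‖k (x - y)‖ * ‖f y‖) := by
    intro x
    have heq : fsLoc k θ a b f x = ∑ y ∈ f.support, k (x - y) *
        (Complex.exp (-(2 * (Real.pi : ℂ) * Complex.I) * (θ : ℂ) * (y : ℂ)) *
          (if y ∈ dilate 1 (a, b) then 0 else f y)) := by
      rw [fsLoc]
      exact tsum_eq_sum (fun y hy => by simp [Finsupp.notMem_support_iff.mp hy])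
    rw [heq]
    refine (norm_sum_le _ _).trans (Finset.sum_le_sum ?_)
    intro y _
    by_cases hy : y ∈ dilate 1 (a, b)
    · simp [hy]
    · simp only [hy, if_false]
      rw [norm_mul, norm_mul]
      have he : ‖Complex.exp (-(2 * (Real.pi : ℂ) * Complex.I) * (θ : ℂ) * (y : ℂ))‖ = 1 := by
        rw [show -(2 * (Real.pi : ℂ) * Complex.I) * (θ : ℂ) * (y : ℂ) =
            ((-(2 * Real.pi * θ * y) : ℝ) : ℂ) * Complex.I by push_cast; ring]
        exact Complex.norm_exp_ofReal_mul_I _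
      rw [he, one_mul]
  -- per-y bound on the column sums
  have main : ∀ y ∈ f.support,
      ∑ x ∈ Finset.Icc a b, (if y ∈ dilate 1 (a, b) then 0 else ‖k (x - y)‖ * ‖f y‖)
        ≤ 27 * 2 ^ 997 * E⁻¹ * (‖f y‖ / (1 + ((distInt a b y : ℤ) : ℝ) / N) ^ 3) := by
    intro y _
    by_cases hy : y ∈ dilate 1 (a, b)
    · simp only [hy, if_true, Finset.sum_const_zero]
      have hdnn : (0 : ℝ) ≤ ((distInt a b y : ℤ) : ℝ) := by
        have h0 : (0 : ℤ) ≤ distInt a b y := le_max_left _ _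
        exact_mod_cast h0
      exact mul_nonneg (mul_nonneg (by positivity) (inv_nonneg.mpr hE.le))
        (div_nonneg (norm_nonneg _)
          (pow_nonneg (add_nonneg zero_le_one (div_nonneg hdnn hN0.le)) 3))
    · simp only [hy, if_false]
      rw [← Finset.sum_mul]
      set d : ℝ := ((distInt a b y : ℤ) : ℝ) with hd
      have hd2 : N ≤ 2 * d := dilate_dist a b y hy
      have hd0 : 0 < d := by linarith
      have hker : ∀ x ∈ Finset.Icc a b, ‖k (x - y)‖ ≤ T ^ 999 / d ^ 1000 := by
        intro x hx
        rw [Finset.mem_Icc] at hx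
        have hdx : d ≤ |((x - y : ℤ) : ℝ)| := by
          have h' := distInt_le_abs a b x y hx.1 hx.2
          have h'' : ((distInt a b y : ℤ) : ℝ) ≤ ((|x - y| : ℤ) : ℝ) := by exact_mod_cast h'
          rwa [Int.cast_abs] at h''
        calc ‖k (x - y)‖ ≤ T⁻¹ * (1 + |((x - y : ℤ) : ℝ)| / T) ^ (-(1000 : ℝ)) := hk (x - y)
          _ ≤ T⁻¹ * (d / T) ^ (-(1000 : ℝ)) := by
              refine mul_le_mul_of_nonneg_left ?_ (by positivity)
              refine Real.rpow_le_rpow_of_nonpos (div_pos hd0 hT) ?_ (by norm_num)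
              have : d / T ≤ |((x - y : ℤ) : ℝ)| / T := by gcongr
              have h0 : (0:ℝ) ≤ |((x - y : ℤ) : ℝ)| / T := by positivity
              linarith
          _ = T ^ 999 / d ^ 1000 := by
              rw [show (-(1000 : ℝ)) = -(((1000 : ℕ)) : ℝ) by norm_num,
                Real.rpow_neg (by positivity), Real.rpow_natCast, div_pow]
              field_simp
      have hcard : (((Finset.Icc a b).card : ℕ) : ℝ) = N := by
        rw [Int.card_Icc, hNdef]
        have h2 : ((b + 1 - a).toNat : ℤ) = b - a + 1 := by omega
        exact_mod_cast congrArg (Int.cast : ℤ → ℝ) h2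
      have hsum : ∑ x ∈ Finset.Icc a b, ‖k (x - y)‖ ≤ N * (T ^ 999 / d ^ 1000) := by
        calc ∑ x ∈ Finset.Icc a b, ‖k (x - y)‖
            ≤ (Finset.Icc a b).card • (T ^ 999 / d ^ 1000) :=
              Finset.sum_le_card_nsmul _ _ _ hker
          _ = (((Finset.Icc a b).card : ℕ) : ℝ) * (T ^ 999 / d ^ 1000) := nsmul_eq_mul _ _
          _ = N * (T ^ 999 / d ^ 1000) := by rw [hcard]
      calc (∑ x ∈ Finset.Icc a b, ‖k (x - y)‖) * ‖f y‖
          ≤ (N * (T ^ 999 / d ^ 1000)) * ‖f y‖ :=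
            mul_le_mul_of_nonneg_right hsum (norm_nonneg _)
        _ ≤ (27 * 2 ^ 997 * E⁻¹ / (1 + d / N) ^ 3) * ‖f y‖ :=
            mul_le_mul_of_nonneg_right (core_ineq N d T E hT hN0 hE hd2 key) (norm_nonneg _)
        _ = 27 * 2 ^ 997 * E⁻¹ * (‖f y‖ / (1 + d / N) ^ 3) := by ring
  -- assemble
  calc N⁻¹ * ∑ x ∈ Finset.Icc a b, ‖fsLoc k θ a b f x‖
      ≤ N⁻¹ * ∑ x ∈ Finset.Icc a b, ∑ y ∈ f.support,
          (if y ∈ dilate 1 (a, b) then 0 else ‖k (x - y)‖ * ‖f y‖) := by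
        refine mul_le_mul_of_nonneg_left (Finset.sum_le_sum fun x _ => hpt x) ?_
        positivity
    _ = N⁻¹ * ∑ y ∈ f.support, ∑ x ∈ Finset.Icc a b,
          (if y ∈ dilate 1 (a, b) then 0 else ‖k (x - y)‖ * ‖f y‖) := by
        rw [Finset.sum_comm]
    _ ≤ N⁻¹ * ∑ y ∈ f.support,
          27 * 2 ^ 997 * E⁻¹ * (‖f y‖ / (1 + ((distInt a b y : ℤ) : ℝ) / N) ^ 3) := by
        refine mul_le_mul_of_nonneg_left (Finset.sum_le_sum main) ?_
        positivity
    _ = 27 * 2 ^ 997 * (2 : ℝ) ^ (-(100 * (s : ℝ))) *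
          (N⁻¹ * ∑ y ∈ f.support,
            ‖f y‖ / (1 + ((distInt a b y : ℤ) : ℝ) / N) ^ 3) := by
        rw [hrw2, ← Finset.mul_sum]
        ring
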